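/- arXiv:math/0306047 — 2 statements merged into one kernel-verified Lean document; each statement's English description precedes it below -/
import Mathlib

section
/- A binomial random variable B(n,p) with p ∈ [0,1) is stochastically dominated by a Poisson random variable with mean −n·ln(1−p). -/
open ProbabilityTheory

open scoped ENNReal NNReal

noncomputable def poisR (a : ℝ) (k : ℕ) : ℝ := Real.exp (-a) * a ^ k / k.factorial

noncomputable def poisE (a : ℝ) (k : ℕ) : ℝ≥0∞ := ENNReal.ofReal (poisR a k)

noncomputable def tailE (a : ℝ) (t : ℕ) : ℝ≥0∞ := ∑' k : ℕ, if t ≤ k then poisE a k else 0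

lemma poisR_nonneg {a : ℝ} (ha : 0 ≤ a) (k : ℕ) : 0 ≤ poisR a k := by
  unfold poisR; positivity

lemma tsum_poisE {a : ℝ} (ha : 0 ≤ a) : ∑' k : ℕ, poisE a k = 1 := by
  have hcoe : ((a.toNNReal : ℝ)) = a := Real.coe_toNNReal a ha
  have hfun : poisR a = poissonPMFReal a.toNNReal := by
    funext k; unfold poisR poissonPMFReal; rw [hcoe]
  have hsum : HasSum (poisR a) 1 := by rw [hfun]; exact poissonPMFRealSum a.toNNReal
  have : ∑' k : ℕ, ENNReal.ofReal (poisR a k) = ENNReal.ofReal (∑' k, poisR a k) :=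
    (ENNReal.ofReal_tsum_of_nonneg (poisR_nonneg ha) hsum.summable).symm
  unfold poisE
  rw [this, hsum.tsum_eq, ENNReal.ofReal_one]

lemma tailE_le_one {a : ℝ} (ha : 0 ≤ a) (t : ℕ) : tailE a t ≤ 1 := by
  rw [← tsum_poisE ha]
  exact ENNReal.tsum_le_tsum fun k => by split <;> simp

lemma tailE_anti {a : ℝ} {t s : ℕ} (h : t ≤ s) : tailE a s ≤ tailE a t := by
  refine ENNReal.tsum_le_tsum fun k => ?_
  by_cases h2 : s ≤ k
  · rw [if_pos h2, if_pos (h.trans h2)]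
  · rw [if_neg h2]; exact zero_le

lemma tailE_zero {a : ℝ} (ha : 0 ≤ a) : tailE a 0 = 1 := by
  unfold tailE
  simp only [Nat.zero_le, if_true]
  exact tsum_poisE ha

lemma poisR_conv (a b : ℝ) (k : ℕ) :
    poisR (a + b) k = ∑ i ∈ Finset.range (k + 1), poisR b i * poisR a (k - i) := by
  unfold poisR
  rw [neg_add, Real.exp_add, add_comm a b, add_pow]
  rw [Finset.mul_sum, Finset.sum_div]
  refine Finset.sum_congr rfl fun i hi => ?_
  have hik : i ≤ k := Nat.lt_succ_iff.mp (Finset.mem_range.mp hi)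
  have hc : (k.choose i : ℝ) = k.factorial / (i.factorial * (k - i).factorial) :=
    Nat.cast_choose ℝ hik
  rw [hc]
  have h1 : (i.factorial : ℝ) ≠ 0 := Nat.cast_ne_zero.mpr i.factorial_ne_zero
  have h2 : ((k - i).factorial : ℝ) ≠ 0 := Nat.cast_ne_zero.mpr (k - i).factorial_ne_zero
  have h3 : (k.factorial : ℝ) ≠ 0 := Nat.cast_ne_zero.mpr k.factorial_ne_zero
  field_simp

lemma poisE_conv {a b : ℝ} (ha : 0 ≤ a) (hb : 0 ≤ b) (k : ℕ) :
    poisE (a + b) k = ∑ jm ∈ Finset.HasAntidiagonal.antidiagonal k, poisE b jm.1 * poisE a jm.2 := by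
  rw [Finset.Nat.sum_antidiagonal_eq_sum_range_succ_mk]
  unfold poisE
  rw [poisR_conv, ENNReal.ofReal_sum_of_nonneg]
  · exact Finset.sum_congr rfl fun i _ =>
      ENNReal.ofReal_mul (poisR_nonneg hb i)
  · exact fun i _ => mul_nonneg (poisR_nonneg hb i) (poisR_nonneg ha _)

lemma tailE_conv {a b : ℝ} (ha : 0 ≤ a) (hb : 0 ≤ b) (t : ℕ) :
    tailE (a + b) t = ∑' j : ℕ, poisE b j * tailE a (t - j) := by
  have step1 : ∀ j : ℕ, poisE b j * tailE a (t - j)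
      = ∑' m : ℕ, (if t ≤ j + m then poisE b j * poisE a m else 0) := by
    intro j
    unfold tailE
    rw [← ENNReal.tsum_mul_left]
    refine tsum_congr fun m => ?_
    rw [mul_ite, mul_zero]
    congr 1
    simp only [eq_iff_iff]
    rw [Nat.sub_le_iff_le_add, add_comm m j]
  calc tailE (a + b) t
      = ∑' k : ℕ, if t ≤ k then ∑ jm ∈ Finset.HasAntidiagonal.antidiagonal k,
          poisE b jm.1 * poisE a jm.2 else 0 := by
        unfold tailE
        exact tsum_congr fun k => by rw [poisE_conv ha hb]
    _ = ∑' k : ℕ, ∑ jm ∈ Finset.HasAntidiagonal.antidiagonal k,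
          (if t ≤ jm.1 + jm.2 then poisE b jm.1 * poisE a jm.2 else 0) := by
        refine tsum_congr fun k => ?_
        by_cases h : t ≤ k
        · rw [if_pos h]
          refine Finset.sum_congr rfl fun jm hjm => ?_
          rw [if_pos]
          rwa [Finset.HasAntidiagonal.mem_antidiagonal.mp hjm]
        · rw [if_neg h]
          refine (Finset.sum_eq_zero fun jm hjm => ?_).symm
          rw [if_neg]
          rwa [Finset.HasAntidiagonal.mem_antidiagonal.mp hjm]
    _ = ∑' jm : ℕ × ℕ, (if t ≤ jm.1 + jm.2 then poisE b jm.1 * poisE a jm.2 else 0) := by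
        rw [← Equiv.tsum_eq Finset.HasAntidiagonal.sigmaAntidiagonalEquivProd
          (fun jm : ℕ × ℕ => if t ≤ jm.1 + jm.2 then poisE b jm.1 * poisE a jm.2 else 0),
          ENNReal.tsum_sigma']
        exact tsum_congr fun k => (Finset.tsum_subtype _ _).symm
    _ = ∑' j : ℕ, ∑' m : ℕ, (if t ≤ j + m then poisE b j * poisE a m else 0) :=
        ENNReal.tsum_prod'
    _ = ∑' j : ℕ, poisE b j * tailE a (t - j) := tsum_congr fun j => (step1 j).symm

lemma tailE_one_eq {b : ℝ} : tailE b 1 = ∑' j : ℕ, poisE b (j + 1) := by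
  unfold tailE
  rw [tsum_eq_zero_add' ENNReal.summable]
  simp

lemma tailE_key {a b : ℝ} (ha : 0 ≤ a) (hb : 0 ≤ b) (t : ℕ) :
    poisE b 0 * tailE a t + tailE b 1 * tailE a (t - 1) ≤ tailE (a + b) t := by
  rw [tailE_conv ha hb, tsum_eq_zero_add' ENNReal.summable]
  simp only [Nat.sub_zero]
  refine add_le_add le_rfl ?_
  calc tailE b 1 * tailE a (t - 1)
      = ∑' j : ℕ, poisE b (j + 1) * tailE a (t - 1) := by
        rw [tailE_one_eq, ENNReal.tsum_mul_right]
    _ ≤ ∑' j : ℕ, poisE b (j + 1) * tailE a (t - (j + 1)) := by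
        refine ENNReal.tsum_le_tsum fun j => ?_
        exact mul_le_mul_right (tailE_anti (Nat.sub_le_sub_left (Nat.le_add_left 1 j) t)) _

noncomputable def binT (p : ℝ) (n t : ℕ) : ℝ :=
  ∑ k ∈ Finset.range (n + 1),
    if t ≤ k then (n.choose k : ℝ) * p ^ k * (1 - p) ^ (n - k) else 0

lemma binT_nonneg {p : ℝ} (hp0 : 0 ≤ p) (hp1 : p ≤ 1) (n t : ℕ) : 0 ≤ binT p n t := by
  refine Finset.sum_nonneg fun k _ => ?_
  have h1 : (0:ℝ) ≤ 1 - p := by linarith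
  split
  · positivity
  · exact le_refl 0

lemma binT_succ {p : ℝ} (n t : ℕ) :
    binT p (n + 1) t = (1 - p) * binT p n t + p * binT p n (t - 1) := by
  set q : ℝ := 1 - p with hq
  have claim1 : p * binT p n (t - 1)
      = ∑ i ∈ Finset.range (n + 1),
          if t ≤ i + 1 then (n.choose i : ℝ) * p ^ (i + 1) * q ^ (n - i) else 0 := by
    unfold binT
    simp only [← hq]
    rw [Finset.mul_sum]
    refine Finset.sum_congr rfl fun i _ => ?_
    rw [mul_ite, mul_zero]
    have hcond : t - 1 ≤ i ↔ t ≤ i + 1 := Nat.sub_le_iff_le_add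
    split_ifs with h1 h2 h2
    · ring
    · exact absurd (hcond.mp h1) h2
    · exact absurd (hcond.mpr h2) h1
    · rfl
  have claim2 : q * binT p n t
      = (∑ i ∈ Finset.range (n + 1),
          if t ≤ i + 1 then (n.choose (i + 1) : ℝ) * p ^ (i + 1) * q ^ (n - i) else 0)
        + (if t ≤ 0 then q ^ (n + 1) else 0) := by
    unfold binT
    simp only [← hq]
    rw [Finset.mul_sum, Finset.sum_range_succ']
    congr 1
    · rw [Finset.sum_range_succ]
      have hz : ((n.choose (n + 1) : ℕ) : ℝ) = 0 := by
        rw [Nat.choose_succ_self]; simp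
      rw [hz]
      simp only [zero_mul, mul_zero, ite_self, add_zero]
      refine Finset.sum_congr rfl fun i hi => ?_
      have hin : i < n := Finset.mem_range.mp hi
      rw [mul_ite, mul_zero]
      congr 1
      have hexp : n - i = (n - (i + 1)) + 1 := by omega
      rw [hexp]
      ring
    · rw [mul_ite, mul_zero]
      congr 1
      simp [pow_succ, mul_comm]
  have hterm : ∀ i, (if t ≤ i + 1 then ((n + 1).choose (i + 1) : ℝ) * p ^ (i + 1) * q ^ (n + 1 - (i + 1)) else 0)
      = (if t ≤ i + 1 then (n.choose i : ℝ) * p ^ (i + 1) * q ^ (n - i) else 0)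
        + (if t ≤ i + 1 then (n.choose (i + 1) : ℝ) * p ^ (i + 1) * q ^ (n - i) else 0) := by
    intro i
    have hch : (((n + 1).choose (i + 1) : ℕ) : ℝ) = (n.choose i : ℝ) + (n.choose (i + 1) : ℝ) := by
      rw [Nat.choose_succ_succ]; push_cast; ring
    have hsub : n + 1 - (i + 1) = n - i := by omega
    rw [hch, hsub]
    split
    · ring
    · ring
  have hf0 : (if t ≤ 0 then ((n + 1).choose 0 : ℝ) * p ^ 0 * q ^ (n + 1 - 0) else 0)
      = (if t ≤ 0 then q ^ (n + 1) else 0) := by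
    split <;> simp
  have hmain : binT p (n + 1) t = p * binT p n (t - 1) + q * binT p n t := by
    rw [claim1, claim2]
    unfold binT
    simp only [← hq]
    rw [Finset.sum_range_succ']
    simp only [hterm]
    rw [Finset.sum_add_distrib, hf0]
    ring
  rw [hmain, hq]
  ring

/-- A binomial random variable `B(n,p)` is stochastically dominated by a
Poisson random variable with mean `-n·ln(1-p)`:
for every `t`, `Pr(B(n,p) ≥ t) ≤ Pr(Po(-n ln(1-p)) ≥ t)`. -/
theorem binomial_stochDom_poisson (n : ℕ) (p : ℝ) (hp0 : 0 ≤ p) (hp1 : p < 1) (t : ℕ) :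
    (∑ k ∈ Finset.range (n + 1),
        if t ≤ k then (n.choose k : ℝ) * p ^ k * (1 - p) ^ (n - k) else 0) ≤
      ∑' k : ℕ, if t ≤ k then
        poissonPMFReal (Real.toNNReal (-(n : ℝ) * Real.log (1 - p))) k else 0 := by
  set q : ℝ := 1 - p with hqdef
  have hq0 : 0 < q := by rw [hqdef]; linarith
  have hq1 : q ≤ 1 := by rw [hqdef]; linarith
  set μ : ℝ := - Real.log q with hμdef
  have hμ0 : 0 ≤ μ := by
    have := Real.log_nonpos hq0.le hq1
    rw [hμdef]; linarith
  have hexpμ : Real.exp (-μ) = q := by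
    rw [hμdef, neg_neg, Real.exp_log hq0]
  -- Poisson pmf at 0 with parameter μ:
  have hP0 : poisE μ 0 = ENNReal.ofReal q := by
    unfold poisE poisR
    simp [hexpμ]
  -- tail at 1 equals p:
  have hT1 : tailE μ 1 = ENNReal.ofReal p := by
    have hsplit : tailE μ 0 = poisE μ 0 + tailE μ 1 := by
      rw [tailE_one_eq]
      unfold tailE
      rw [tsum_eq_zero_add' ENNReal.summable]
      simp
    have h1 : poisE μ 0 + tailE μ 1 = 1 := by rw [← hsplit, tailE_zero hμ0]
    have h2 : poisE μ 0 + ENNReal.ofReal p = 1 := by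
      rw [hP0, ← ENNReal.ofReal_add (le_of_lt hq0) hp0]
      have : q + p = 1 := by rw [hqdef]; ring
      rw [this, ENNReal.ofReal_one]
    have h3 : poisE μ 0 + tailE μ 1 = poisE μ 0 + ENNReal.ofReal p := h1.trans h2.symm
    exact (ENNReal.add_right_inj (by rw [hP0]; exact ENNReal.ofReal_ne_top)).mp h3
  -- main induction
  have key : ∀ (m : ℕ) (s : ℕ), ENNReal.ofReal (binT p m s) ≤ tailE ((m : ℝ) * μ) s := by
    intro m
    induction m with
    | zero =>
      intro s
      have hb : binT p 0 s = if s ≤ 0 then 1 else 0 := by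
        unfold binT
        simp
      rw [hb]
      rcases Nat.eq_zero_or_pos s with hs | hs
      · subst hs
        simp only [le_refl, if_true]
        rw [ENNReal.ofReal_one]
        have : ((0 : ℕ) : ℝ) * μ = 0 := by simp
        rw [this, tailE_zero (le_refl 0)]
      · rw [if_neg (by omega)]
        simp
    | succ m ih =>
      intro s
      rw [binT_succ]
      have hbn := binT_nonneg hp0 hp1.le m s
      have hbn' := binT_nonneg hp0 hp1.le m (s - 1)
      have hsplit : ENNReal.ofReal ((1 - p) * binT p m s + p * binT p m (s - 1))
          = ENNReal.ofReal q * ENNReal.ofReal (binT p m s)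
            + ENNReal.ofReal p * ENNReal.ofReal (binT p m (s - 1)) := by
        rw [ENNReal.ofReal_add (mul_nonneg hq0.le hbn) (mul_nonneg hp0 hbn'),
          ENNReal.ofReal_mul hq0.le, ENNReal.ofReal_mul hp0]
      rw [← hqdef, hsplit]
      have step1 : ENNReal.ofReal q * ENNReal.ofReal (binT p m s)
            + ENNReal.ofReal p * ENNReal.ofReal (binT p m (s - 1))
          ≤ poisE μ 0 * tailE ((m : ℝ) * μ) s + tailE μ 1 * tailE ((m : ℝ) * μ) (s - 1) := by
        rw [hP0, hT1]
        exact add_le_add (mul_le_mul_right (ih s) _) (mul_le_mul_right (ih (s - 1)) _)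
      refine step1.trans ?_
      have hcast : ((m + 1 : ℕ) : ℝ) * μ = (m : ℝ) * μ + μ := by push_cast; ring
      rw [hcast]
      exact tailE_key (by positivity) hμ0 s
  -- convert to the stated form
  have hlam : ((Real.toNNReal (-(n : ℝ) * Real.log q) : ℝ≥0) : ℝ) = (n : ℝ) * μ := by
    rw [Real.coe_toNNReal]
    · rw [hμdef]; ring
    · have := Real.log_nonpos hq0.le hq1
      nlinarith [Nat.cast_nonneg (α := ℝ) n]
  have hpmf : ∀ k, poissonPMFReal (Real.toNNReal (-(n : ℝ) * Real.log q)) k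
      = poisR ((n : ℝ) * μ) k := by
    intro k
    unfold poissonPMFReal poisR
    rw [hlam]
  have hTfin : tailE ((n : ℝ) * μ) t ≠ ⊤ :=
    ne_top_of_le_ne_top ENNReal.one_ne_top (tailE_le_one (by positivity) t)
  have hRHS : (∑' k : ℕ, if t ≤ k then
        poissonPMFReal (Real.toNNReal (-(n : ℝ) * Real.log q)) k else 0)
      = (tailE ((n : ℝ) * μ) t).toReal := by
    unfold tailE
    rw [ENNReal.tsum_toReal_eq]
    · refine tsum_congr fun k => ?_
      rw [hpmf k]
      split
      · unfold poisE
        rw [ENNReal.toReal_ofReal (poisR_nonneg (by positivity) k)]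
      · simp
    · intro k
      split
      · exact ENNReal.ofReal_ne_top
      · exact ENNReal.zero_ne_top
  rw [hRHS]
  have h1 := key n t
  have h2 : binT p n t = (ENNReal.ofReal (binT p n t)).toReal :=
    (ENNReal.toReal_ofReal (binT_nonneg hp0 hp1.le n t)).symm
  calc (∑ k ∈ Finset.range (n + 1),
        if t ≤ k then (n.choose k : ℝ) * p ^ k * (1 - p) ^ (n - k) else 0)
      = (ENNReal.ofReal (binT p n t)).toReal := h2
    _ ≤ (tailE ((n : ℝ) * μ) t).toReal := ENNReal.toReal_mono hTfin h1
end

section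
/- Let c > 1 and let ρ* ∈ (0,1) satisfy c = ln(ρ*)/(ρ* − 1). Then ∫_{ρ*}^{1} (c − cρ + ln ρ)/2 dρ = (ρ* − 1)/2 − ((ρ* + 1)/4)·ln ρ*, and this quantity is positive. Moreover, as ρ* → 1⁻ this quantity is asymptotic to (1 − ρ*)³/24. -/
open MeasureTheory Filter

private lemma log_lt_aux {x : ℝ} (hx0 : 0 < x) (hx1 : x < 1) :
    Real.log x < 2 * (x - 1) / (x + 1) := by
  set h : ℝ → ℝ := fun y => 2 * (y - 1) / (y + 1) - Real.log y with hh
  have hderiv : ∀ y ∈ Set.Ioo (0:ℝ) 1, HasDerivAt h (4 / (y+1)^2 - 1/y) y := by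
    intro y hy
    have hy0 := hy.1
    have hne : y + 1 ≠ 0 := by linarith
    have h1 : HasDerivAt (fun z : ℝ => 2 * (z - 1) / (z + 1)) (4 / (y+1)^2) y := by
      have := (((hasDerivAt_id y).sub_const 1).const_mul 2).div
        ((hasDerivAt_id y).add_const 1) hne
      refine this.congr_deriv ?_
      simp only [id_eq]
      field_simp
      ring
    have h2 : HasDerivAt Real.log (1/y) y := by
      simpa [one_div] using Real.hasDerivAt_log (ne_of_gt hy0)
    exact h1.sub h2
  have hanti : StrictAntiOn h (Set.Ioc (0:ℝ) 1) := by
    apply strictAntiOn_of_deriv_neg (convex_Ioc 0 1)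
    · intro y hy
      have hy0 : (0:ℝ) < y := hy.1
      have hne : y + 1 ≠ 0 := by linarith
      exact (((continuousAt_const.mul (continuousAt_id.sub continuousAt_const)).div
        (continuousAt_id.add continuousAt_const) hne).sub
        (Real.continuousAt_log (ne_of_gt hy0))).continuousWithinAt
    · intro y hy
      rw [interior_Ioc] at hy
      rw [(hderiv y hy).deriv]
      have hy0 := hy.1
      have hy1 := hy.2
      rw [sub_neg, div_lt_div_iff₀ (by positivity) hy0]
      nlinarith [sq_nonneg (y - 1)]
  have key : h 1 < h x :=
    hanti (Set.mem_Ioc.2 ⟨hx0, le_of_lt hx1⟩) (Set.mem_Ioc.2 ⟨one_pos, le_refl 1⟩) hx1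
  have h1 : h 1 = 0 := by simp [hh]
  rw [h1] at key
  simp only [hh] at key
  linarith

/-- For `c > 1` and `ρ* ∈ (0,1)` with `c = ln(ρ*)/(ρ*−1)`:
`∫_{ρ*}^1 (c − cρ + ln ρ)/2 dρ = (ρ*−1)/2 − ((ρ*+1)/4) ln ρ*`, this quantity is
positive, and as `ρ* → 1⁻` it is asymptotic to `(1−ρ*)³/24`. -/
theorem unitClause_dissatisfied_integral :
    (∀ c ρs : ℝ, 1 < c → ρs ∈ Set.Ioo (0 : ℝ) 1 → c = Real.log ρs / (ρs - 1) →
      (∫ ρ in ρs..1, (c - c * ρ + Real.log ρ) / 2) =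
          (ρs - 1) / 2 - ((ρs + 1) / 4) * Real.log ρs ∧
        0 < (ρs - 1) / 2 - ((ρs + 1) / 4) * Real.log ρs) ∧
    Tendsto (fun ρs : ℝ =>
        ((ρs - 1) / 2 - ((ρs + 1) / 4) * Real.log ρs) / ((1 - ρs) ^ 3 / 24))
      (nhdsWithin 1 (Set.Iio 1)) (nhds 1) := by
  constructor
  · intro c ρs hc hρ hceq
    obtain ⟨h0, h1⟩ := hρ
    have hne1 : ρs - 1 ≠ 0 := by linarith
    have hlog : Real.log ρs = c * (ρs - 1) := by
      rw [hceq, div_mul_cancel₀ _ hne1]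
    have hlt := log_lt_aux h0 h1
    have hpos : 0 < (ρs - 1) / 2 - ((ρs + 1) / 4) * Real.log ρs := by
      have h2 : Real.log ρs * (ρs + 1) < 2 * (ρs - 1) := by
        rw [lt_div_iff₀ (by linarith : (0:ℝ) < ρs + 1)] at hlt
        linarith
      nlinarith
    refine ⟨?_, hpos⟩
    have hint : (∫ ρ in ρs..1, (c - c * ρ + Real.log ρ) / 2)
        = ∫ ρ in ρs..1, ((c/2 - c/2 * ρ) + 1/2 * Real.log ρ) := by
      apply intervalIntegral.integral_congr
      intro x _
      ring
    have hi1 : IntervalIntegrable (fun ρ : ℝ => c/2 - c/2 * ρ) volume ρs 1 :=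
      (continuous_const.sub (continuous_const.mul continuous_id)).intervalIntegrable _ _
    have hi2 : IntervalIntegrable (fun ρ : ℝ => 1/2 * Real.log ρ) volume ρs 1 := by
      apply ContinuousOn.intervalIntegrable
      apply continuousOn_const.mul
      apply Real.continuousOn_log.mono
      intro x hx
      simp only [Set.mem_compl_iff, Set.mem_singleton_iff]
      rintro rfl
      rw [Set.uIcc_of_le h1.le] at hx
      exact absurd hx.1 (not_le.2 h0)
    have e1 : (∫ ρ in ρs..1, (c/2 - c/2 * ρ))
        = (c/2*1 - c/4*1^2) - (c/2*ρs - c/4*ρs^2) := by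
      apply intervalIntegral.integral_eq_sub_of_hasDerivAt
        (f := fun ρ : ℝ => c/2*ρ - c/4*ρ^2)
      · intro x _
        have h := ((hasDerivAt_id x).const_mul (c/2)).sub
          ((hasDerivAt_pow 2 x).const_mul (c/4))
        refine h.congr_deriv ?_
        try simp only [id_eq]
        push_cast
        ring
      · exact hi1
    rw [hint, intervalIntegral.integral_add hi1 hi2, e1,
      intervalIntegral.integral_const_mul, integral_log,
      Real.log_one, hlog]
    ring
  · -- L'Hôpital twice
    have hmem : ∀ᶠ ρ in nhdsWithin (1:ℝ) (Set.Iio 1), ρ ∈ Set.Ioo (0:ℝ) 1 := by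
      have : Set.Ioo (0:ℝ) 1 ∈ nhdsWithin (1:ℝ) (Set.Iio 1) :=
        Ioo_mem_nhdsLT_of_mem (Set.mem_Ioc.2 ⟨one_pos, le_refl 1⟩)
      filter_upwards [this] with ρ hρ using hρ
    have hf' : ∀ ρ ∈ Set.Ioo (0:ℝ) 1, HasDerivAt
        (fun ρ : ℝ => (ρ - 1) / 2 - (ρ + 1) / 4 * Real.log ρ)
        (1/2 - (1/4 * Real.log ρ + (ρ+1)/4 * ρ⁻¹)) ρ := by
      intro ρ hρ
      have hne : ρ ≠ 0 := ne_of_gt hρ.1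
      have h1 : HasDerivAt (fun ρ : ℝ => (ρ - 1) / 2) (1/2) ρ := by
        simpa using ((hasDerivAt_id ρ).sub_const 1).div_const 2
      have h2 : HasDerivAt (fun ρ : ℝ => (ρ + 1) / 4 * Real.log ρ)
          (1/4 * Real.log ρ + (ρ+1)/4 * ρ⁻¹) ρ := by
        have := (((hasDerivAt_id ρ).add_const 1).div_const 4).mul (Real.hasDerivAt_log hne)
        refine this.congr_deriv ?_
        try simp only [id_eq]
        try ring
      exact h1.sub h2
    have hg' : ∀ ρ : ℝ, HasDerivAt (fun ρ : ℝ => (1 - ρ)^3 / 24) (-(1-ρ)^2/8) ρ := by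
      intro ρ
      have := (((hasDerivAt_id ρ).const_sub 1).pow 3).div_const 24
      refine this.congr_deriv ?_
      try simp only [id_eq]
      push_cast
      ring
    have hf'' : ∀ ρ ∈ Set.Ioo (0:ℝ) 1, HasDerivAt
        (fun ρ : ℝ => 1/2 - (1/4 * Real.log ρ + (ρ+1)/4 * ρ⁻¹)) ((1-ρ)/(4*ρ^2)) ρ := by
      intro ρ hρ
      have hne : ρ ≠ 0 := ne_of_gt hρ.1
      have h1 : HasDerivAt (fun ρ : ℝ => 1/4 * Real.log ρ) (1/4 * ρ⁻¹) ρ :=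
        (Real.hasDerivAt_log hne).const_mul (1/4)
      have h2 : HasDerivAt (fun ρ : ℝ => (ρ+1)/4 * ρ⁻¹)
          (1/4 * ρ⁻¹ + (ρ+1)/4 * (-(ρ^2)⁻¹)) ρ := by
        have := (((hasDerivAt_id ρ).add_const 1).div_const 4).mul (hasDerivAt_inv hne)
        refine this.congr_deriv ?_
        try simp only [id_eq]
        try ring
      have h3 := (hasDerivAt_const ρ (1/2:ℝ)).sub (h1.add h2)
      refine h3.congr_deriv ?_
      field_simp
      ring
    have hg'' : ∀ ρ : ℝ, HasDerivAt (fun ρ : ℝ => -(1-ρ)^2/8) ((1-ρ)/4) ρ := by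
      intro ρ
      have := ((((hasDerivAt_id ρ).const_sub 1).pow 2).div_const 8).neg
      convert this using 1
      · rfl
      · rfl
      · funext x
        simp only [Pi.neg_apply, Pi.pow_apply, id_eq]
        ring
      · simp only [id_eq]
        push_cast
        ring
    have hdiv2 : Tendsto (fun ρ : ℝ => ((1-ρ)/(4*ρ^2)) / ((1-ρ)/4))
        (nhdsWithin (1:ℝ) (Set.Iio 1)) (nhds 1) := by
      have heq : ∀ᶠ ρ in nhdsWithin (1:ℝ) (Set.Iio 1),
          1/ρ^2 = ((1-ρ)/(4*ρ^2)) / ((1-ρ)/4) := by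
        filter_upwards [hmem] with ρ hρ
        have h1 : (1:ℝ) - ρ ≠ 0 := by have := hρ.2; intro h; linarith
        have h0 : ρ ≠ 0 := ne_of_gt hρ.1
        field_simp
      have hbase : Tendsto (fun ρ : ℝ => 1/ρ^2) (nhdsWithin (1:ℝ) (Set.Iio 1)) (nhds 1) := by
        have hca : ContinuousAt (fun ρ : ℝ => 1/ρ^2) 1 :=
          ContinuousAt.div continuousAt_const (continuousAt_id.pow 2) (by norm_num)
        have hb : Tendsto (fun ρ : ℝ => 1/ρ^2) (nhdsWithin (1:ℝ) (Set.Iio 1))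
            (nhds (1/1^2)) := hca.tendsto.mono_left nhdsWithin_le_nhds
        simpa using hb
      exact hbase.congr' heq
    have hdiv1 : Tendsto (fun ρ : ℝ =>
        (1/2 - (1/4 * Real.log ρ + (ρ+1)/4 * ρ⁻¹)) / (-(1-ρ)^2/8))
        (nhdsWithin (1:ℝ) (Set.Iio 1)) (nhds 1) := by
      apply HasDerivAt.lhopital_zero_nhdsLT
        (f' := fun ρ : ℝ => (1-ρ)/(4*ρ^2)) (g' := fun ρ : ℝ => (1-ρ)/4)
      · filter_upwards [hmem] with ρ hρ using hf'' ρ hρ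
      · filter_upwards [hmem] with ρ hρ using hg'' ρ
      · filter_upwards [hmem] with ρ hρ
        have hlt : (0:ℝ) < 1 - ρ := by linarith [hρ.2]
        positivity
      · have hc : ContinuousAt (fun ρ : ℝ => 1/2 - (1/4 * Real.log ρ + (ρ+1)/4 * ρ⁻¹)) 1 :=
          continuousAt_const.sub
            (((Real.continuousAt_log one_ne_zero).const_mul (1/4)).add
              (((continuousAt_id.add continuousAt_const).div_const 4).mul
                (continuousAt_inv₀ one_ne_zero)))
        have hb : Tendsto (fun ρ : ℝ => 1/2 - (1/4 * Real.log ρ + (ρ+1)/4 * ρ⁻¹))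
            (nhdsWithin (1:ℝ) (Set.Iio 1))
            (nhds (1/2 - (1/4 * Real.log 1 + (1+1)/4 * (1:ℝ)⁻¹))) :=
          hc.tendsto.mono_left nhdsWithin_le_nhds
        norm_num at hb
        exact hb
      · have hc : ContinuousAt (fun ρ : ℝ => -(1-ρ)^2/8) 1 := by fun_prop
        have hb : Tendsto (fun ρ : ℝ => -(1-ρ)^2/8) (nhdsWithin (1:ℝ) (Set.Iio 1))
            (nhds (-(1-(1:ℝ))^2/8)) := hc.tendsto.mono_left nhdsWithin_le_nhds
        norm_num at hb
        exact hb
      · exact hdiv2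
    apply HasDerivAt.lhopital_zero_nhdsLT
      (f' := fun ρ : ℝ => 1/2 - (1/4 * Real.log ρ + (ρ+1)/4 * ρ⁻¹))
      (g' := fun ρ : ℝ => -(1-ρ)^2/8)
    · filter_upwards [hmem] with ρ hρ using hf' ρ hρ
    · filter_upwards [hmem] with ρ hρ using hg' ρ
    · filter_upwards [hmem] with ρ hρ
      have hlt : (0:ℝ) < 1 - ρ := by linarith [hρ.2]
      have hne : -(1-ρ)^2/8 < 0 := by
        have : (0:ℝ) < (1-ρ)^2 := by positivity
        linarith
      exact ne_of_lt hne
    · have hc : ContinuousAt (fun ρ : ℝ => (ρ - 1) / 2 - (ρ + 1) / 4 * Real.log ρ) 1 :=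
        ((continuousAt_id.sub continuousAt_const).div_const 2).sub
          (((continuousAt_id.add continuousAt_const).div_const 4).mul
            (Real.continuousAt_log one_ne_zero))
      have hb : Tendsto (fun ρ : ℝ => (ρ - 1) / 2 - (ρ + 1) / 4 * Real.log ρ)
          (nhdsWithin (1:ℝ) (Set.Iio 1))
          (nhds (((1:ℝ) - 1) / 2 - (1 + 1) / 4 * Real.log 1)) :=
        hc.tendsto.mono_left nhdsWithin_le_nhds
      norm_num at hb
      exact hb
    · have hc : ContinuousAt (fun ρ : ℝ => (1-ρ)^3/24) 1 := by fun_prop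
      have hb : Tendsto (fun ρ : ℝ => (1-ρ)^3/24) (nhdsWithin (1:ℝ) (Set.Iio 1))
          (nhds ((1-(1:ℝ))^3/24)) := hc.tendsto.mono_left nhdsWithin_le_nhds
      norm_num at hb
      exact hb
    · exact hdiv1
end
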